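/- There is a universal constant c > 0 such that for every domain X, every concept class H of functions X → {0,1} whose VC dimension is finite and equal to d, and every integer k ≥ 1, the VC dimension of the class H^{∨k} of all disjunctions (pointwise OR) of at most k concepts from H is at most c · k · log₂(2k) · d. -/

import Mathlib

set_option maxHeartbeats 1000000

/-- A concept class `C` shatters a finite set `A` if every Boolean labeling of `A`
is realized by some concept in `C`. -/
def Shatters {X : Type*} (C : Set (X → Bool)) (A : Finset X) : Prop :=
  ∀ f : X → Bool, ∃ c ∈ C, ∀ x ∈ A, c x = f x

/-- The VC dimension of a concept class: the supremum of sizes of shattered finite sets. -/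
noncomputable def vcDim {X : Type*} (C : Set (X → Bool)) : ℕ∞ :=
  ⨆ A ∈ {A : Finset X | Shatters C A}, (A.card : ℕ∞)

/-- `H^{∨k}`: all pointwise disjunctions of at most `k` (and at least one) concepts from `H`. -/
def disjK {X : Type*} (H : Set (X → Bool)) (k : ℕ) : Set (X → Bool) :=
  {g | ∃ l : List (X → Bool), l ≠ [] ∧ l.length ≤ k ∧ (∀ h ∈ l, h ∈ H) ∧
    g = fun x => l.any fun h => h x}


open Finset in
lemma aux_sumChoose (d m : ℕ) (hd : 1 ≤ d) (hdm : d ≤ m) :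
    ((∑ i ∈ Iic d, m.choose i : ℕ) : ℝ) ≤ (Real.exp 1 * m / d) ^ d := by
  have hm : 0 < m := lt_of_lt_of_le hd hdm
  set x : ℝ := (d : ℝ) / m with hx
  have hx0 : 0 < x := by positivity
  have hx1 : x ≤ 1 := by
    rw [hx, div_le_one (by positivity)]; exact_mod_cast hdm
  have h1 : x ^ d * ((∑ i ∈ Iic d, m.choose i : ℕ) : ℝ)
      ≤ ∑ i ∈ Iic d, x ^ i * (m.choose i : ℝ) := by
    push_cast
    rw [Finset.mul_sum]
    refine Finset.sum_le_sum fun i hi => ?_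
    have : x ^ d ≤ x ^ i := pow_le_pow_of_le_one hx0.le hx1 (mem_Iic.1 hi)
    exact mul_le_mul_of_nonneg_right this (by positivity)
  have h2 : ∑ i ∈ Iic d, x ^ i * (m.choose i : ℝ)
      ≤ ∑ i ∈ Finset.range (m + 1), x ^ i * (m.choose i : ℝ) := by
    refine Finset.sum_le_sum_of_subset_of_nonneg ?_ fun i _ _ => by positivity
    intro i hi
    simp only [mem_Iic, Finset.mem_range] at *
    omega
  have h3 : ∑ i ∈ Finset.range (m + 1), x ^ i * (m.choose i : ℝ) = (x + 1) ^ m := by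
    rw [add_pow]
    refine Finset.sum_congr rfl fun i _ => by ring
  have h4 : (x + 1) ^ m ≤ Real.exp d := by
    calc (x + 1) ^ m ≤ Real.exp x ^ m := by
          exact pow_le_pow_left₀ (by positivity) (Real.add_one_le_exp x) m
      _ = Real.exp (x * m) := by rw [← Real.exp_nat_mul]; ring_nf
      _ = Real.exp d := by
          congr 1
          rw [hx, div_mul_cancel₀]; exact_mod_cast hm.ne'
  have key : x ^ d * ((∑ i ∈ Iic d, m.choose i : ℕ) : ℝ) ≤ Real.exp d :=
    le_trans h1 (le_trans h2 (h3 ▸ h4))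
  have hxd : 0 < x ^ d := by positivity
  rw [← mul_le_mul_iff_right₀ hxd]
  calc x ^ d * ((∑ i ∈ Iic d, m.choose i : ℕ) : ℝ) ≤ Real.exp d := key
    _ = x ^ d * ((Real.exp 1 * m / d) ^ d) := by
        rw [← mul_pow, ← Real.exp_one_pow]
        congr 1
        field_simp [hx]
        rw [hx, div_mul_cancel₀]; exact_mod_cast hm.ne'

lemma aux_log_le (x : ℝ) (hx : 0 < x) : Real.log x ≤ x / Real.exp 1 := by
  have h := Real.log_le_sub_one_of_pos (show 0 < x / Real.exp 1 by positivity)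
  rw [Real.log_div (ne_of_gt hx) (Real.exp_ne_zero 1), Real.log_exp] at h
  linarith

lemma aux_numeric (m d k : ℕ) (hk : 1 ≤ k) (hd : 1 ≤ d) (hdm : d ≤ m)
    (h : (2:ℝ) ^ m ≤ ((Real.exp 1 * m / d) ^ d) ^ k) :
    (m : ℝ) ≤ 100 * k * Real.logb 2 (2 * k) * d := by
  set E := Real.exp 1 with hE
  have hm : (1:ℝ) ≤ m := by exact_mod_cast le_trans hd hdm
  have hdR : (1:ℝ) ≤ d := by exact_mod_cast hd
  have hkR : (1:ℝ) ≤ k := by exact_mod_cast hk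
  have hE0 : (0:ℝ) < E := Real.exp_pos 1
  have hEmd : (0:ℝ) < E * m / d := by positivity
  have hlog : (m:ℝ) * Real.log 2 ≤ (d : ℝ) * k * Real.log (E * m / d) := by
    have h2 := Real.log_le_log (by positivity) h
    rw [Real.log_pow, Real.log_pow, Real.log_pow] at h2
    calc (m:ℝ) * Real.log 2 = (m:ℝ) * Real.log 2 := rfl
      _ ≤ (k:ℝ) * ((d:ℝ) * Real.log (E * m / d)) := h2
      _ = (d : ℝ) * k * Real.log (E * m / d) := by ring
  have hsplit : Real.log (E * m / d) = 1 + Real.log ((m:ℝ)/(d*k)) + Real.log k := by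
    rw [mul_div_assoc, Real.log_mul (Real.exp_ne_zero 1) (by positivity), Real.log_exp]
    have : ((m:ℝ)/d) = ((m:ℝ)/(d*k)) * k := by field_simp
    rw [this, Real.log_mul (by positivity) (by positivity)]
    ring
  have hx := aux_log_le ((m:ℝ)/(d*k)) (by positivity)
  have key : (m:ℝ) * Real.log 2 ≤ (d:ℝ)*k + (m:ℝ)/E + (d:ℝ)*k*Real.log k := by
    have h3 : (d:ℝ)*k * (((m:ℝ)/(d*k))/E) = (m:ℝ)/E := by field_simp
    calc (m:ℝ) * Real.log 2 ≤ (d : ℝ) * k * Real.log (E * m / d) := hlog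
      _ = (d:ℝ)*k * (1 + Real.log ((m:ℝ)/(d*k)) + Real.log k) := by rw [hsplit]
      _ ≤ (d:ℝ)*k * (1 + ((m:ℝ)/(d*k))/E + Real.log k) := by
          have : (0:ℝ) ≤ (d:ℝ)*k := by positivity
          nlinarith [hx]
      _ = (d:ℝ)*k + (m:ℝ)/E + (d:ℝ)*k*Real.log k := by rw [mul_add, mul_add, h3]; ring
  -- bounds
  have hlog2lb : (0.6931:ℝ) < Real.log 2 := by
    have := Real.log_two_gt_d9; linarith
  have hlog2ub : Real.log 2 ≤ 1 := by
    have := Real.log_le_sub_one_of_pos (show (0:ℝ) < 2 by norm_num); linarith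
  have hElb : (2.7:ℝ) < E := by
    have := Real.exp_one_gt_d9; rw [hE]; linarith
  have hlogk : (0:ℝ) ≤ Real.log k := Real.log_nonneg hkR
  have hL : Real.logb 2 (2*k) = (Real.log 2 + Real.log k) / Real.log 2 := by
    rw [Real.logb, Real.log_mul (by norm_num) (by positivity)]
  have hinv : (m:ℝ)/E ≤ (m:ℝ)/2.7 := by
    apply div_le_div_of_nonneg_left (by linarith) (by norm_num) hElb.le
  have hinv2 : (m:ℝ)/2.7 = (m:ℝ) * (10/27) := by ring
  have key2 : (m:ℝ) * 0.32 ≤ (d:ℝ)*k*(1 + Real.log k) := by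
    have hml : (m:ℝ) * (0.32 + 10/27) ≤ (m:ℝ) * Real.log 2 :=
      mul_le_mul_of_nonneg_left (by linarith) (by linarith)
    nlinarith [key, hinv, hinv2, hml]
  have hLge : (1 + Real.log k) ≤ Real.logb 2 (2*k) := by
    rw [hL, le_div_iff₀ (by linarith)]
    nlinarith
  have hLpos : (0:ℝ) < Real.logb 2 (2*k) := lt_of_lt_of_le (by linarith) hLge
  have hfin : (m:ℝ)*0.32 ≤ (d:ℝ)*k*Real.logb 2 (2*k) :=
    le_trans key2 (mul_le_mul_of_nonneg_left hLge (by positivity))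
  have hp : (0:ℝ) ≤ (d:ℝ)*k*Real.logb 2 (2*k) := by positivity
  nlinarith [hfin, hp]

open Finset in
lemma aux_card_le (X : Type) (H : Set (X → Bool)) (d k : ℕ) (hk : 1 ≤ k)
    (hH : vcDim H = (d : ℕ∞)) (A : Finset X) (hA : Shatters (disjK H k) A) :
    2 ^ A.card ≤ (∑ i ∈ Iic d, A.card.choose i) ^ k := by
  classical
  set α := {x : X // x ∈ A}
  have hcard : Fintype.card α = A.card := Fintype.card_coe A
  -- restriction map
  set ρ : (X → Bool) → Finset α := fun h => univ.filter (fun y => h y.1 = true) with hρ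
  set 𝒜 : Finset (Finset α) := univ.filter (fun s => ∃ h ∈ H, ρ h = s) with h𝒜
  -- Claim A : vcDim bound
  have hvc : 𝒜.vcDim ≤ d := by
    refine Finset.sup_le fun s hs => ?_
    rw [Finset.mem_shatterer] at hs
    have hsh : Shatters H (s.image Subtype.val) := by
      intro f
      obtain ⟨u, hu, hsu⟩ := hs (Finset.filter_subset (fun y => f y.1 = true) s)
      rw [h𝒜, Finset.mem_filter] at hu
      obtain ⟨-, h, hhH, rfl⟩ := hu
      refine ⟨h, hhH, fun x hx => ?_⟩
      obtain ⟨y, hy, rfl⟩ := Finset.mem_image.1 hx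
      have h1 : y ∈ s ∩ ρ h ↔ y ∈ s.filter (fun y => f y.1 = true) := by rw [hsu]
      simp only [Finset.mem_inter, Finset.mem_filter, hρ, Finset.mem_univ, true_and,
        and_iff_right hy] at h1
      rw [Bool.eq_iff_iff]
      exact h1
    have hle : ((s.image Subtype.val).card : ℕ∞) ≤ vcDim H := by
      refine le_trans ?_ (le_iSup₂ (f := fun A _ => (A.card : ℕ∞)) (s.image Subtype.val) hsh)
      exact le_refl _
    rw [hH, Finset.card_image_of_injective _ Subtype.val_injective] at hle
    exact_mod_cast hle
  -- Claim B : 2 ^ m ≤ #𝒜 ^ k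
  have hpow : 2 ^ A.card ≤ 𝒜.card ^ k := by
    have hsub : (univ : Finset α).powerset ⊆
        (Fintype.piFinset fun _ : Fin k => 𝒜).image (fun v => univ.sup v) := by
      intro t _
      set f : X → Bool := fun x => decide (∃ hx : x ∈ A, (⟨x, hx⟩ : α) ∈ t) with hf
      obtain ⟨g, hg, hgf⟩ := hA f
      obtain ⟨l, hne, hlen, hmem, rfl⟩ := hg
      set elt : Fin k → (X → Bool) := fun i =>
        if h : (i : ℕ) < l.length then l.get ⟨i, h⟩ else l.headI with helt
      have heltmem : ∀ i, elt i ∈ l := by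
        intro i
        rw [helt]
        dsimp only
        split
        case isTrue h => exact List.get_mem _ _
        case isFalse h =>
          cases l with
          | nil => exact absurd rfl hne
          | cons a l' => exact List.mem_cons_self

      refine Finset.mem_image.2 ⟨fun i => ρ (elt i), ?_, ?_⟩
      · rw [Fintype.mem_piFinset]
        intro i
        rw [h𝒜, Finset.mem_filter]
        exact ⟨Finset.mem_univ _, elt i, hmem _ (heltmem i), rfl⟩
      · ext y
        rw [Finset.mem_sup]
        have hval : (∃ i : Fin k, ∃ _ : i ∈ (univ : Finset (Fin k)), y ∈ ρ (elt i))
            ↔ ∃ h ∈ l, h y.1 = true := by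
          constructor
          · rintro ⟨i, -, hy⟩
            rw [hρ] at hy
            simp only [Finset.mem_filter, Finset.mem_univ, true_and] at hy
            exact ⟨elt i, heltmem i, hy⟩
          · rintro ⟨h, hh, hy⟩
            obtain ⟨j, hjl, rfl⟩ := List.mem_iff_get.1 hh
            refine ⟨⟨j, lt_of_lt_of_le j.2 hlen⟩, Finset.mem_univ _, ?_⟩
            rw [hρ]
            simp only [Finset.mem_filter, Finset.mem_univ, true_and]
            rw [helt]
            dsimp only
            rw [dif_pos (show ((j : ℕ) : ℕ) < l.length from j.2)]
            simpa using hy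
        simp only [exists_prop] at hval ⊢
        rw [hval]
        have hany := hgf y.1 y.2
        rw [hf] at hany
        dsimp only at hany
        constructor
        · rintro ⟨h, hh, hy⟩
          have : (l.any fun h => h y.1) = true := List.any_eq_true.2 ⟨h, hh, hy⟩
          rw [hany] at this
          obtain ⟨hx, ht⟩ := of_decide_eq_true this
          simpa using ht
        · intro hyt
          have : decide (∃ hx : y.1 ∈ A, (⟨y.1, hx⟩ : α) ∈ t) = true := by
            refine decide_eq_true ⟨y.2, ?_⟩
            simpa using hyt
          rw [← hany] at this
          exact List.any_eq_true.1 this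
    have h1 := Finset.card_le_card hsub
    rw [Finset.card_powerset, Finset.card_univ, hcard] at h1
    calc 2 ^ A.card ≤ _ := h1
      _ ≤ (Fintype.piFinset fun _ : Fin k => 𝒜).card := Finset.card_image_le
      _ = 𝒜.card ^ k := by rw [Fintype.card_piFinset]; simp
  -- combine with Sauer–Shelah
  have hS : 𝒜.card ≤ ∑ i ∈ Iic d, A.card.choose i := by
    calc 𝒜.card ≤ 𝒜.shatterer.card := Finset.card_le_card_shatterer 𝒜
      _ ≤ ∑ i ∈ Iic 𝒜.vcDim, (Fintype.card α).choose i := Finset.card_shatterer_le_sum_vcDim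
      _ ≤ ∑ i ∈ Iic d, A.card.choose i := by
          rw [hcard]
          exact Finset.sum_le_sum_of_subset (Finset.Iic_subset_Iic.2 hvc)
  exact le_trans hpow (Nat.pow_le_pow_left hS k)


/-- There is a universal constant `c > 0` such that for every domain `X`, every concept
class `H` with finite VC dimension `d`, and every `k ≥ 1`, the VC dimension of `H^{∨k}`
is at most `c · k · log₂(2k) · d`. -/
theorem stmt0 :
    ∃ c : ℝ, 0 < c ∧
      ∀ (X : Type) (H : Set (X → Bool)) (d k : ℕ), 1 ≤ k →
        vcDim H = (d : ℕ∞) →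
        ∀ A : Finset X, Shatters (disjK H k) A →
          (A.card : ℝ) ≤ c * k * Real.logb 2 (2 * k) * d := by
  refine ⟨100, by norm_num, fun X H d k hk hH A hA => ?_⟩
  have hkR : (1:ℝ) ≤ k := by exact_mod_cast hk
  have hL : (1:ℝ) ≤ Real.logb 2 (2 * k) := by
    have h2 : (2:ℝ) ≤ 2 * k := by linarith
    calc (1:ℝ) = Real.logb 2 2 := (Real.logb_self_eq_one (by norm_num)).symm
      _ ≤ Real.logb 2 (2 * k) := Real.logb_le_logb_of_le (by norm_num) (by norm_num) h2
  have hcard := aux_card_le X H d k hk hH A hA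
  rcases Nat.eq_zero_or_pos d with hd0 | hd
  · subst hd0
    have : 2 ^ A.card ≤ 1 := by
      have h0 : (Finset.Iic 0 : Finset ℕ) = {0} := rfl
      simpa [h0] using hcard
    have hm0 : A.card = 0 := by
      by_contra h
      have : 2 ^ 1 ≤ 2 ^ A.card := Nat.pow_le_pow_right (by norm_num) (Nat.one_le_iff_ne_zero.2 h)
      omega
    simp [hm0]
  · have hdR : (1:ℝ) ≤ d := by exact_mod_cast hd
    rcases le_or_gt A.card d with hmd | hdm
    · have hmR : (A.card : ℝ) ≤ d := by exact_mod_cast hmd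
      have h1 : (1:ℝ) ≤ (k:ℝ) * Real.logb 2 (2*k) := by nlinarith [hkR, hL]
      nlinarith [h1, hdR, hmR]
    · have hdm' : d ≤ A.card := hdm.le
      have hreal : (2:ℝ) ^ A.card ≤ ((Real.exp 1 * A.card / d) ^ d) ^ k := by
        have h1 : ((2:ℝ)) ^ A.card ≤ ((∑ i ∈ Finset.Iic d, A.card.choose i : ℕ) : ℝ) ^ k := by
          exact_mod_cast hcard
        refine le_trans h1 ?_
        exact pow_le_pow_left₀ (by positivity) (aux_sumChoose d A.card hd hdm') k
      exact aux_numeric A.card d k hk hd hdm' hreal
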